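/- In the generalized trellis graph with arbitrary K, let P be a source-to-sink path with last edge e_q = (u_q, t). Define S(e_j) for an edge e_j = (u_j, v_j) as {(u,u') ∈ E : δ(u) = δ(u_j)} if v_j ≠ t, and {(u,u') ∈ E : δ(u) ≥ δ(u_j)} if v_j = t. Then for every edge e_j on P, no edge of S(e_j) \ {e_j} lies on P. -/

import Mathlib

/-- `Reach adj k u v`: there is a directed walk of length `k` from `u` to `v`. -/
def Reach {V : Type*} (adj : V → V → Prop) : ℕ → V → V → Prop
  | 0, u, v => u = v
  | (k + 1), u, v => ∃ w, adj u w ∧ Reach adj k w v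

/-- `graphDist adj s v`: the length (in edges) of a shortest directed path from `s` to `v`. -/
noncomputable def graphDist {V : Type*} (adj : V → V → Prop) (s v : V) : ℕ :=
  sInf {k | Reach adj k s v}

lemma reach_snoc {V : Type*} (adj : V → V → Prop) :
    ∀ k u w v, Reach adj k u w → adj w v → Reach adj (k + 1) u v := by
  intro k
  induction k with
  | zero => intro u w v h hv; cases h; exact ⟨v, hv, rfl⟩
  | succ n ih =>
    rintro u w v ⟨x, hx, hr⟩ hv
    exact ⟨x, hx, ih x w v hr hv⟩

lemma reach_level {V : Type*} (adj : V → V → Prop) (t : V) (level : V → ℕ)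
    (hlev : ∀ u v, adj u v → v ≠ t → level v = level u + 1)
    (ht : ∀ v, ¬ adj t v) :
    ∀ k u v, Reach adj k u v → v ≠ t → level v = level u + k := by
  intro k
  induction k with
  | zero => intro u v h _; cases h; simp
  | succ n ih =>
    rintro u v ⟨w, hw, hr⟩ hv
    have hwt : w ≠ t := by
      rintro rfl
      cases n with
      | zero => exact hv ((show w = v from hr).symm)
      | succ n => obtain ⟨x, hx, _⟩ := hr; exact ht x hx
    have h1 := hlev u w hw hwt
    have h2 := ih w v hr hv
    omega

/-- Corollary "edges of slice": in the layered DAG, let `P` be an s-t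
path. For edges `e_j = (p i, p (i+1))` and `e' = (p i', p (i'+1))` of `P`, if `e'` lies
in `S(e_j)` — i.e. `δ(tail e') = δ(tail e_j)` when the head of `e_j` is not the sink,
and `δ(tail e') ≥ δ(tail e_j)` when it is the sink — then `e' = e_j`. Hence no edge of
`S(e_j) \ {e_j}` lies on `P`. -/
theorem stmt15 {V : Type*} (adj : V → V → Prop) (s t : V)
    (level : V → ℕ) (hs : level s = 0)
    (hlev : ∀ u v, adj u v → v ≠ t → level v = level u + 1)
    (ht : ∀ v, ¬ adj t v)
    (m : ℕ) (p : Fin (m + 1) → V)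
    (hp0 : p 0 = s) (hpl : p (Fin.last m) = t)
    (hadj : ∀ i : Fin m, adj (p i.castSucc) (p i.succ))
    (hmid : ∀ i : Fin (m + 1), i ≠ Fin.last m → p i ≠ t) :
    ∀ i i' : Fin m,
      ((p i.succ ≠ t ∧
          graphDist adj s (p i'.castSucc) = graphDist adj s (p i.castSucc)) ∨
       (p i.succ = t ∧
          graphDist adj s (p i.castSucc) ≤ graphDist adj s (p i'.castSucc))) →
      (p i'.castSucc, p i'.succ) = (p i.castSucc, p i.succ) := by
  -- reachability along the path
  have hreach : ∀ n : ℕ, ∀ hn : n ≤ m, Reach adj n s (p ⟨n, by omega⟩) := by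
    intro n
    induction n with
    | zero => intro _; show s = p ⟨0, _⟩; rw [← hp0]; rfl
    | succ k ih =>
      intro hn
      have hk : k ≤ m := by omega
      have hadjk := hadj ⟨k, by omega⟩
      exact reach_snoc adj k s (p ⟨k, by omega⟩) _ (ih hk) hadjk
  -- for j < m, p ⟨j,_⟩ ≠ t
  have hnt : ∀ j : Fin m, p j.castSucc ≠ t := by
    intro j
    apply hmid
    intro h
    have := congrArg Fin.val h
    simp [Fin.castSucc, Fin.last] at this
    omega
  -- levels along the path
  have hlevp : ∀ j : Fin m, level (p j.castSucc) = (j : ℕ) := by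
    intro j
    have hr := hreach j.val (le_of_lt j.isLt)
    have := reach_level adj t level hlev ht j.val s (p ⟨j.val, by omega⟩) hr (hnt j)
    rw [hs] at this
    rw [zero_add] at this; exact this
  -- graphDist along the path
  have hdist : ∀ j : Fin m, graphDist adj s (p j.castSucc) = (j : ℕ) := by
    intro j
    have hset : {k | Reach adj k s (p j.castSucc)} = {(j : ℕ)} := by
      ext k
      simp only [Set.mem_setOf_eq, Set.mem_singleton_iff]
      constructor
      · intro hk
        have := reach_level adj t level hlev ht k s (p j.castSucc) hk (hnt j)
        rw [hs, hlevp j] at this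
        omega
      · rintro rfl
        have := hreach j.val (le_of_lt j.isLt)
        exact this
    rw [graphDist, hset, csInf_singleton]
  intro i i' h
  have hii : i' = i := by
    rcases h with ⟨hne, heq⟩ | ⟨heqt, hle⟩
    · rw [hdist, hdist] at heq
      exact Fin.ext heq
    · -- p i.succ = t forces i.succ = last, so i = m-1
      have hisucc : i.succ = Fin.last m := by
        by_contra hc
        exact hmid i.succ hc heqt
      have hi : (i : ℕ) + 1 = m := by
        have := congrArg Fin.val hisucc
        simpa [Fin.last] using this
      rw [hdist, hdist] at hle
      have := i'.isLt
      exact Fin.ext (by omega)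
  rw [hii]
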